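/- Let B be a finite left skew brace with Frat(B) = 0. Then Fit(B) is the product (equivalently, the sum) of all the abelian minimal ideals of B. -/

import Mathlib

universe u

/-- A left skew brace: a set with two group structures `(B,+)` and `(B,·)` sharing the
same identity element, satisfying `a·(b+c) = a·b - a + a·c`. -/
class SkewBrace (B : Type u) extends AddGroup B, Group B where
  zero_eq_one : (0 : B) = 1
  skew_distrib : ∀ a b c : B, a * (b + c) = a * b + (-a + a * c)

namespace SkewBrace

variable {B : Type u} [SkewBrace B]

/-- The star product `a ∗ b = -a + a·b - b`. -/
def sbStar (a b : B) : B := -a + a * b + -b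

/-- The additive commutator `[a,b]₊ = -a - b + a + b`. -/
def addCommutator (a b : B) : B := -a + -b + a + b

/-- The multiplicative commutator `[a,b]· = a⁻¹b⁻¹ab`. -/
def mulCommutator (a b : B) : B := a⁻¹ * b⁻¹ * a * b

/-- A subbrace: a subset that is a subgroup of both `(B,+)` and `(B,·)`. -/
structure IsSubbrace (S : Set B) : Prop where
  zero_mem : (0 : B) ∈ S
  add_mem : ∀ ⦃a b : B⦄, a ∈ S → b ∈ S → a + b ∈ S
  neg_mem : ∀ ⦃a : B⦄, a ∈ S → -a ∈ S
  mul_mem : ∀ ⦃a b : B⦄, a ∈ S → b ∈ S → a * b ∈ S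
  inv_mem : ∀ ⦃a : B⦄, a ∈ S → a⁻¹ ∈ S

/-- `J` is an ideal of the subbrace `S`: a subbrace of `S`, normal in `(S,+)` and
`(S,·)`, with `S ∗ J ⊆ J` and `J ∗ S ⊆ J`. -/
structure IsIdealIn (S J : Set B) : Prop where
  subset : J ⊆ S
  isSubbrace : IsSubbrace J
  add_conj_mem : ∀ ⦃b : B⦄, b ∈ S → ∀ ⦃a : B⦄, a ∈ J → b + a + -b ∈ J
  mul_conj_mem : ∀ ⦃b : B⦄, b ∈ S → ∀ ⦃a : B⦄, a ∈ J → b * a * b⁻¹ ∈ J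
  star_mem_left : ∀ ⦃b : B⦄, b ∈ S → ∀ ⦃a : B⦄, a ∈ J → sbStar b a ∈ J
  star_mem_right : ∀ ⦃a : B⦄, a ∈ J → ∀ ⦃b : B⦄, b ∈ S → sbStar a b ∈ J

/-- An ideal of the brace `B`. -/
def IsIdeal (J : Set B) : Prop := IsIdealIn (Set.univ : Set B) J

/-- A left ideal: a subbrace `L` with `B ∗ L ⊆ L`. -/
structure IsLeftIdeal (L : Set B) : Prop where
  isSubbrace : IsSubbrace L
  star_mem_left : ∀ (b : B), ∀ ⦃a : B⦄, a ∈ L → sbStar b a ∈ L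

/-- The ideal of `B` generated by a subset `E`. -/
def idealClosure (E : Set B) : Set B := ⋂₀ {I : Set B | IsIdeal I ∧ E ⊆ I}

/-- The subbrace of `B` generated by a subset `E`. -/
def subbraceClosure (E : Set B) : Set B := ⋂₀ {S : Set B | IsSubbrace S ∧ E ⊆ S}

/-- The set `X_{I,J} = [I,J]₊ ∪ [I,J]· ∪ {i·j - (i+j) : i ∈ I, j ∈ J}`. -/
def commSet (I J : Set B) : Set B :=
  (AddSubgroup.closure {x : B | ∃ i ∈ I, ∃ j ∈ J, x = addCommutator i j} : Set B) ∪
    (Subgroup.closure {x : B | ∃ i ∈ I, ∃ j ∈ J, x = mulCommutator i j} : Set B) ∪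
    {x : B | ∃ i ∈ I, ∃ j ∈ J, x = i * j + -(i + j)}

/-- The commutator ideal `[I,J]^B`: the ideal of `B` generated by `X_{I,J}`. -/
def commIdeal (I J : Set B) : Set B := idealClosure (commSet I J)

/-- The set `X ∗ Y = {x ∗ y : x ∈ X, y ∈ Y}`. -/
def starSet (X Y : Set B) : Set B := {z : B | ∃ x ∈ X, ∃ y ∈ Y, z = sbStar x y}

/-- The centre of the subbrace `S`. -/
def centreIn (S : Set B) : Set B :=
  {a ∈ S | ∀ b ∈ S, a + b = b + a ∧ a + b = a * b ∧ a + b = b * a}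

/-- The centre `ζ(B)` of the brace `B`. -/
def centre (B : Type u) [SkewBrace B] : Set B := centreIn (Set.univ : Set B)

/-- For ideals `J ≤ I` of the subbrace `S`: `I/J` is a central factor of `S`,
i.e. `I/J ≤ ζ(S/J)`. -/
def IsCentralFactorIn (S J I : Set B) : Prop :=
  ∀ ⦃a : B⦄, a ∈ I → ∀ ⦃b : B⦄, b ∈ S →
    -(a + b) + (b + a) ∈ J ∧ -(a + b) + a * b ∈ J ∧ -(a + b) + b * a ∈ J

/-- The subbrace `S` is centrally nilpotent of class at most `n`: there is a chain of
ideals `0 = I₀ ≤ I₁ ≤ … ≤ Iₙ = S` of `S` with `I_{k+1}/I_k ≤ ζ(S/I_k)`. -/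
def CentrallyNilpotentInOfClassLE (S : Set B) (n : ℕ) : Prop :=
  ∃ I : ℕ → Set B, I 0 = {0} ∧ I n = S ∧
    (∀ k ≤ n, IsIdealIn S (I k)) ∧
    (∀ k < n, I k ⊆ I (k + 1)) ∧
    (∀ k < n, IsCentralFactorIn S (I k) (I (k + 1)))

/-- The subbrace `S` is centrally nilpotent. -/
def CentrallyNilpotentIn (S : Set B) : Prop := ∃ n : ℕ, CentrallyNilpotentInOfClassLE S n

/-- The brace `B` is centrally nilpotent. -/
def CentrallyNilpotent (B : Type u) [SkewBrace B] : Prop :=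
  CentrallyNilpotentIn (Set.univ : Set B)

/-- The brace `B` is locally centrally-nilpotent: every finitely generated subbrace is
centrally nilpotent. -/
def LocallyCentrallyNilpotent (B : Type u) [SkewBrace B] : Prop :=
  ∀ E : Finset B, CentrallyNilpotentIn (subbraceClosure (E : Set B))

/-- The (finite) upper central series of `B`: `ζ₀(B) = 0` and
`ζ_{n+1}(B)/ζ_n(B) = ζ(B/ζ_n(B))`. -/
def zetaNat (B : Type u) [SkewBrace B] : ℕ → Set B
  | 0 => {0}
  | n + 1 =>
    {a : B | ∀ b : B, -(a + b) + (b + a) ∈ zetaNat B n ∧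
      -(a + b) + a * b ∈ zetaNat B n ∧ -(a + b) + b * a ∈ zetaNat B n}

/-- The transfinite upper central series of `B`. -/
noncomputable def zetaOrd (B : Type u) [SkewBrace B] (o : Ordinal.{u}) : Set B :=
  Ordinal.limitRecOn o ({0} : Set B)
    (fun _ Z =>
      {a : B | ∀ b : B, -(a + b) + (b + a) ∈ Z ∧ -(a + b) + a * b ∈ Z ∧ -(a + b) + b * a ∈ Z})
    (fun o _ ih => ⋃ (β : {β : Ordinal.{u} // β < o}), ih β.1 β.2)

/-- The brace `B` is hypercentral: the upper central series reaches `B`. -/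
def Hypercentral (B : Type u) [SkewBrace B] : Prop :=
  ∃ o : Ordinal.{u}, zetaOrd B o = Set.univ

/-- The largest ideal of `B` contained in `C`. -/
def idealCore (C : Set B) : Set B := ⋃₀ {I : Set B | IsIdeal I ∧ I ⊆ C}

/-- The lower `B`-central series of an ideal `I`:
`lowerCentralB I n = Γ_{n+1}(I)^B`, so `Γ₁(I)^B = I` and `Γ_{n+1}(I)^B = [Γ_n(I)^B, I]^B`. -/
def lowerCentralB (I : Set B) : ℕ → Set B
  | 0 => I
  | n + 1 => commIdeal (lowerCentralB I n) I

/-- `I` is a `B`-centrally nilpotent ideal. -/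
def BCentrallyNilpotent (I : Set B) : Prop := ∃ n : ℕ, lowerCentralB I n = {0}

/-- The derived series of an ideal with respect to `B`. -/
def derivedB (I : Set B) : ℕ → Set B
  | 0 => I
  | n + 1 => commIdeal (derivedB I n) (derivedB I n)

/-- The preimages in `B` of the derived series of `I/F` with respect to `B/F`. -/
def derivedModB (F I : Set B) : ℕ → Set B
  | 0 => I
  | n + 1 => idealClosure (commSet (derivedModB F I n) (derivedModB F I n) ∪ F)

/-- The Fitting ideal of `B`: the ideal generated by all `B`-centrally nilpotent ideals. -/
def FitIdeal (B : Type u) [SkewBrace B] : Set B :=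
  idealClosure (⋃₀ {I : Set B | IsIdeal I ∧ BCentrallyNilpotent I})

/-- The centraliser of an ideal `I`: the largest ideal `C` with `[C,I]^B = 0`. -/
def idealCentraliser (I : Set B) : Set B :=
  ⋃₀ {C : Set B | IsIdeal C ∧ commIdeal C I ⊆ {0}}

/-- The centraliser of a chief factor `Itop/Ibot`: the largest ideal `C` of `B` with
`[C, Itop]^B ≤ Ibot`. -/
def factorCentraliser (Itop Ibot : Set B) : Set B :=
  ⋃₀ {C : Set B | IsIdeal C ∧ commIdeal C Itop ⊆ Ibot}

/-- A maximal left ideal of `B`. -/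
def IsMaximalLeftIdeal (L : Set B) : Prop :=
  IsLeftIdeal L ∧ L ≠ Set.univ ∧
    ∀ L' : Set B, IsLeftIdeal L' → L ⊆ L' → L' = L ∨ L' = Set.univ

/-- The Frattini ideal of `B`. -/
def FratIdeal (B : Type u) [SkewBrace B] : Set B :=
  (⋂₀ {L : Set B | IsMaximalLeftIdeal L}) ∩ FitIdeal B

/-- The additive torsion set `T₊(B)`. -/
def addTorsion (B : Type u) [SkewBrace B] : Set B := {a : B | ∃ n : ℕ, 0 < n ∧ n • a = 0}

/-- The multiplicative torsion set `T·(B)`. -/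
def mulTorsion (B : Type u) [SkewBrace B] : Set B := {a : B | ∃ n : ℕ, 0 < n ∧ a ^ n = 1}

/-- The order of an element of a brace: the cardinality of the subbrace it generates
(`0` if infinite). -/
noncomputable def elemOrder (a : B) : ℕ := Nat.card ↥(subbraceClosure ({a} : Set B))

/-- `a` is a `π`-element: it is periodic and its order is a `π`-number. -/
def IsPiElement (π : Set ℕ) (a : B) : Prop :=
  0 < elemOrder a ∧ ∀ p : ℕ, p.Prime → p ∣ elemOrder a → p ∈ π

/-- The order of the coset `a + J` in the quotient brace modulo the ideal `J`:
the number of cosets of `J` in the subbrace generated by `a` together with `J`. -/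
noncomputable def elemOrderMod (J : Set B) (a : B) : ℕ :=
  Nat.card ↥((fun x : B => {y : B | -x + y ∈ J}) '' subbraceClosure ({a} ∪ J))

/-- The coset of `a` modulo the ideal `J` is a `π`-element of the quotient brace. -/
def IsPiElementMod (π : Set ℕ) (J : Set B) (a : B) : Prop :=
  0 < elemOrderMod J a ∧ ∀ p : ℕ, p.Prime → p ∣ elemOrderMod J a → p ∈ π

/-- A subideal: a finite chain `S = C₀ ⊴ C₁ ⊴ … ⊴ Cₙ = B`. -/
def IsSubideal (S : Set B) : Prop :=
  ∃ (n : ℕ) (C : ℕ → Set B), C 0 = S ∧ C n = Set.univ ∧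
    (∀ k ≤ n, IsSubbrace (C k)) ∧ ∀ k < n, IsIdealIn (C (k + 1)) (C k)

/-- An ascendant subbrace: an ordinal-indexed ascending chain from `S` to `B`. -/
def IsAscendant (S : Set B) : Prop :=
  ∃ (l : Ordinal.{u}) (C : Ordinal.{u} → Set B), C 0 = S ∧ C l = Set.univ ∧
    (∀ α ≤ l, IsSubbrace (C α)) ∧
    (∀ α < l, IsIdealIn (C (α + 1)) (C α)) ∧
    ∀ μ ≤ l, Order.IsSuccLimit μ → C μ = ⋃ β < μ, C β

/-- A serial subbrace: there is a complete chain of subbraces containing `S` and `B`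
in which each member is an ideal of its immediate successor. -/
def IsSerial (S : Set B) : Prop :=
  ∃ 𝒞 : Set (Set B), S ∈ 𝒞 ∧ Set.univ ∈ 𝒞 ∧
    (∀ D ∈ 𝒞, IsSubbrace D) ∧
    (∀ D ∈ 𝒞, ∀ E ∈ 𝒞, D ⊆ E ∨ E ⊆ D) ∧
    (∀ 𝒟 ⊆ 𝒞, 𝒟.Nonempty → ⋃₀ 𝒟 ∈ 𝒞 ∧ ⋂₀ 𝒟 ∈ 𝒞) ∧
    ∀ D ∈ 𝒞, ∀ E ∈ 𝒞, D ⊂ E → (∀ F ∈ 𝒞, ¬(D ⊂ F ∧ F ⊂ E)) → IsIdealIn E D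

/-- `S` is a maximal `p`-subgroup of `(B,+)`. -/
def IsMaxAddPSubgroup (p : ℕ) (S : AddSubgroup B) : Prop :=
  (∀ a ∈ S, ∃ k : ℕ, p ^ k • a = 0) ∧
    ∀ T : AddSubgroup B, (∀ a ∈ T, ∃ k : ℕ, p ^ k • a = 0) → S ≤ T → T = S

/-- `S` is a maximal `p`-subgroup of `(B,·)`. -/
def IsMaxMulPSubgroup (p : ℕ) (S : Subgroup B) : Prop :=
  (∀ a ∈ S, ∃ k : ℕ, a ^ p ^ k = 1) ∧
    ∀ T : Subgroup B, (∀ a ∈ T, ∃ k : ℕ, a ^ p ^ k = 1) → S ≤ T → T = S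

/-- Formal 2-polynomials of a brace: terms in two variables built from `+`, `-`, `·`,
inverse and the constant `0`. -/
inductive Poly2 : Type
  | X : Poly2
  | Y : Poly2
  | zero : Poly2
  | add : Poly2 → Poly2 → Poly2
  | neg : Poly2 → Poly2
  | mul : Poly2 → Poly2 → Poly2
  | inv : Poly2 → Poly2

/-- Evaluation of a formal 2-polynomial in a brace. -/
def Poly2.eval : Poly2 → B → B → B
  | .X, a, _ => a
  | .Y, _, b => b
  | .zero, _, _ => 0
  | .add p q, a, b => p.eval a b + q.eval a b
  | .neg p, a, b => -(p.eval a b)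
  | .mul p q, a, b => p.eval a b * q.eval a b
  | .inv p, a, b => (p.eval a b)⁻¹

/-- A 2-polynomial is absorbing if it vanishes whenever one variable is `0`. -/
def Poly2.Absorbing (p : Poly2) (B : Type u) [SkewBrace B] : Prop :=
  (∀ x : B, p.eval x (0 : B) = 0) ∧ ∀ y : B, p.eval (0 : B) y = 0

/-! ### Auxiliary development for the Gaschütz-Fitting theorem -/

section Aux

variable {B : Type u} [SkewBrace B]

lemma sb_mul_zero (a : B) : a * 0 = a := by rw [zero_eq_one, mul_one]

lemma sb_zero_mul (a : B) : (0 : B) * a = a := by rw [zero_eq_one, one_mul]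

lemma sb_mul_eq (a b : B) : a * b = a + sbStar a b + b := by
  simp [sbStar, add_assoc]

lemma sb_mul_neg (a b : B) : a * -b = a + (-(a * b) + a) := by
  have h := skew_distrib a b (-b)
  rw [add_neg_cancel, sb_mul_zero] at h
  -- h : a = a * b + (-a + a * -b)
  have h2 := congrArg (fun t => -(a*b) + t) h
  simp only [neg_add_cancel_left] at h2
  rw [h2, add_neg_cancel_left]

lemma sb_star_add (a b c : B) : sbStar a (b + c) = sbStar a b + b + sbStar a c + -b := by
  simp [sbStar, skew_distrib, neg_add_rev, add_assoc]

lemma sb_star_mul (a b c : B) : sbStar (a * b) c = sbStar a (sbStar b c) + sbStar b c + sbStar a c := by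
  simp [sbStar, skew_distrib, sb_mul_neg, neg_add_rev, add_assoc, mul_assoc, mul_inv_rev]

lemma sb_mixed_eq (x y : B) : x * y + -(x + y) = x + sbStar x y + -x := by
  rw [sb_mul_eq x y]; simp [neg_add_rev, add_assoc]

lemma addCommutator_swap (x y : B) : addCommutator y x = -(addCommutator x y) := by
  simp [addCommutator, neg_add_rev, add_assoc]

lemma mulCommutator_swap (x y : B) : mulCommutator y x = (mulCommutator x y)⁻¹ := by
  simp [mulCommutator, mul_inv_rev, mul_assoc]

lemma addCommutator_add_left (a b c : B) :
    addCommutator (a + b) c = (-b + addCommutator a c + b) + addCommutator b c := by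
  simp [addCommutator, neg_add_rev, add_assoc]

lemma addCommutator_add_right (a b c : B) :
    addCommutator a (b + c) = addCommutator a c + (-c + addCommutator a b + c) := by
  simp [addCommutator, neg_add_rev, add_assoc]

lemma mulCommutator_mul_left (a b c : B) :
    mulCommutator (a * b) c = (b⁻¹ * mulCommutator a c * b) * mulCommutator b c := by
  simp [mulCommutator, mul_inv_rev, mul_assoc]

lemma mulCommutator_mul_right (a b c : B) :
    mulCommutator a (b * c) = mulCommutator a c * (c⁻¹ * mulCommutator a b * c) := by
  simp [mulCommutator, mul_inv_rev, mul_assoc]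


/-! #### Subgroups from subbraces -/

def IsSubbrace.addSubgroup {S : Set B} (h : IsSubbrace S) : AddSubgroup B where
  carrier := S
  add_mem' := fun ha hb => h.add_mem ha hb
  zero_mem' := h.zero_mem
  neg_mem' := fun ha => h.neg_mem ha

def IsSubbrace.subgroup {S : Set B} (h : IsSubbrace S) : Subgroup B where
  carrier := S
  mul_mem' := fun ha hb => h.mul_mem ha hb
  one_mem' := zero_eq_one (B := B) ▸ h.zero_mem
  inv_mem' := fun ha => h.inv_mem ha

/-! #### Ideal accessors -/

variable {J : Set B}

lemma IsIdeal.zero_mem (hJ : IsIdeal J) : (0 : B) ∈ J := hJ.isSubbrace.zero_mem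

lemma IsIdeal.add (hJ : IsIdeal J) {a b : B} (ha : a ∈ J) (hb : b ∈ J) : a + b ∈ J :=
  hJ.isSubbrace.add_mem ha hb

lemma IsIdeal.neg (hJ : IsIdeal J) {a : B} (ha : a ∈ J) : -a ∈ J := hJ.isSubbrace.neg_mem ha

lemma IsIdeal.mul (hJ : IsIdeal J) {a b : B} (ha : a ∈ J) (hb : b ∈ J) : a * b ∈ J :=
  hJ.isSubbrace.mul_mem ha hb

lemma IsIdeal.inv (hJ : IsIdeal J) {a : B} (ha : a ∈ J) : a⁻¹ ∈ J := hJ.isSubbrace.inv_mem ha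

lemma IsIdeal.conj (hJ : IsIdeal J) (b : B) {a : B} (ha : a ∈ J) : b + a + -b ∈ J :=
  hJ.add_conj_mem (Set.mem_univ b) ha

lemma IsIdeal.conj' (hJ : IsIdeal J) (b : B) {a : B} (ha : a ∈ J) : -b + a + b ∈ J := by
  simpa using hJ.conj (-b) ha

lemma IsIdeal.mconj (hJ : IsIdeal J) (b : B) {a : B} (ha : a ∈ J) : b * a * b⁻¹ ∈ J :=
  hJ.mul_conj_mem (Set.mem_univ b) ha

lemma IsIdeal.mconj' (hJ : IsIdeal J) (b : B) {a : B} (ha : a ∈ J) : b⁻¹ * a * b ∈ J := by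
  simpa using hJ.mconj b⁻¹ ha

lemma IsIdeal.starl (hJ : IsIdeal J) (b : B) {a : B} (ha : a ∈ J) : sbStar b a ∈ J :=
  hJ.star_mem_left (Set.mem_univ b) ha

lemma IsIdeal.starr (hJ : IsIdeal J) {a : B} (ha : a ∈ J) (b : B) : sbStar a b ∈ J :=
  hJ.star_mem_right ha (Set.mem_univ b)

lemma IsIdeal.mem_neg (hJ : IsIdeal J) {a : B} : -a ∈ J ↔ a ∈ J :=
  ⟨fun h => by simpa using hJ.neg h, hJ.neg⟩

lemma IsIdeal.cancel_left (hJ : IsIdeal J) {j : B} (hj : j ∈ J) (x : B) : j + x ∈ J ↔ x ∈ J :=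
  ⟨fun h => by simpa using hJ.add (hJ.neg hj) h, fun h => hJ.add hj h⟩

lemma IsIdeal.cancel_right (hJ : IsIdeal J) {j : B} (hj : j ∈ J) (x : B) : x + j ∈ J ↔ x ∈ J :=
  ⟨fun h => by simpa [add_assoc] using hJ.add h (hJ.neg hj), fun h => hJ.add h hj⟩

lemma IsIdeal.cancel_mid (hJ : IsIdeal J) {j : B} (hj : j ∈ J) (a b : B) :
    a + (j + b) ∈ J ↔ a + b ∈ J := by
  have e : a + (j + b) = (a + j + -a) + (a + b) := by simp [add_assoc]
  rw [e]; exact hJ.cancel_left (hJ.conj a hj) _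

/-! #### The ideal `{0}` and `idealClosure` -/

lemma isIdeal_zero : IsIdeal ({0} : Set B) := by
  constructor
  · exact fun x _ => Set.mem_univ x
  · constructor <;> simp +contextual [sb_mul_zero, ← zero_eq_one]
    rw [zero_eq_one, inv_one]
  · intro b _ a ha; simp only [Set.mem_singleton_iff] at ha ⊢; simp [ha]
  · intro b _ a ha; simp only [Set.mem_singleton_iff] at ha ⊢
    simp [ha, sb_mul_zero, ← zero_eq_one]
  · intro b _ a ha; simp only [Set.mem_singleton_iff] at ha ⊢
    simp [ha, sbStar, sb_mul_zero]
  · intro a ha b _; simp only [Set.mem_singleton_iff] at ha ⊢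
    simp [ha, sbStar, sb_zero_mul]

lemma isIdeal_sInter {𝒮 : Set (Set B)} (h : ∀ I ∈ 𝒮, IsIdeal I) : IsIdeal (⋂₀ 𝒮) := by
  constructor
  · exact fun x _ => Set.mem_univ x
  · constructor
    · exact Set.mem_sInter.2 fun I hI => (h I hI).zero_mem
    · exact fun a b ha hb => Set.mem_sInter.2 fun I hI =>
        (h I hI).add (Set.mem_sInter.1 ha I hI) (Set.mem_sInter.1 hb I hI)
    · exact fun a ha => Set.mem_sInter.2 fun I hI => (h I hI).neg (Set.mem_sInter.1 ha I hI)
    · exact fun a b ha hb => Set.mem_sInter.2 fun I hI =>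
        (h I hI).mul (Set.mem_sInter.1 ha I hI) (Set.mem_sInter.1 hb I hI)
    · exact fun a ha => Set.mem_sInter.2 fun I hI => (h I hI).inv (Set.mem_sInter.1 ha I hI)
  · exact fun b _ a ha => Set.mem_sInter.2 fun I hI => (h I hI).conj b (Set.mem_sInter.1 ha I hI)
  · exact fun b _ a ha => Set.mem_sInter.2 fun I hI => (h I hI).mconj b (Set.mem_sInter.1 ha I hI)
  · exact fun b _ a ha => Set.mem_sInter.2 fun I hI => (h I hI).starl b (Set.mem_sInter.1 ha I hI)
  · exact fun a ha b _ => Set.mem_sInter.2 fun I hI => (h I hI).starr (Set.mem_sInter.1 ha I hI) b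

lemma subset_idealClosure (E : Set B) : E ⊆ idealClosure E :=
  fun x hx => Set.mem_sInter.2 fun _ hI => hI.2 hx

lemma isIdeal_idealClosure (E : Set B) : IsIdeal (idealClosure E) :=
  isIdeal_sInter fun _ hI => hI.1

lemma idealClosure_le {E I : Set B} (hI : IsIdeal I) (h : E ⊆ I) : idealClosure E ⊆ I :=
  fun _ hx => Set.mem_sInter.1 hx I ⟨hI, h⟩

/-! #### Additive vs multiplicative cosets of an ideal -/

lemma IsIdeal.neg_add_mem_iff (hJ : IsIdeal J) (x y : B) : -x + y ∈ J ↔ x⁻¹ * y ∈ J := by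
  constructor
  · intro hj
    have e : x⁻¹ * y = sbStar x⁻¹ (-x + y) + (-x + y) := by
      have : y = x + (-x + y) := by simp [add_assoc]
      calc x⁻¹ * y = x⁻¹ * (x + (-x + y)) := by rw [← this]
        _ = x⁻¹ * x + (-x⁻¹ + x⁻¹ * (-x + y)) := skew_distrib _ _ _
        _ = sbStar x⁻¹ (-x + y) + (-x + y) := by
            rw [inv_mul_cancel, ← zero_eq_one]; simp [sbStar, add_assoc]
    rw [e]; exact hJ.add (hJ.starl _ hj) hj
  · intro hm
    have e : -x + y = sbStar x (x⁻¹ * y) + x⁻¹ * y := by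
      have : y = x * (x⁻¹ * y) := by simp [mul_assoc]
      calc -x + y = -x + x * (x⁻¹ * y) := by rw [← this]
        _ = sbStar x (x⁻¹ * y) + x⁻¹ * y := by simp [sbStar, add_assoc]
    rw [e]; exact hJ.add (hJ.starl _ hm) hm

lemma IsIdeal.add_neg_mem_iff (hJ : IsIdeal J) (x l : B) : x + -l ∈ J ↔ x * l⁻¹ ∈ J := by
  have h1 : x + -l ∈ J ↔ -l + x ∈ J := by
    constructor
    · intro h; simpa [add_assoc] using hJ.conj' l h
    · intro h; simpa [add_assoc] using hJ.conj l h
  have h2 : l⁻¹ * x ∈ J ↔ x * l⁻¹ ∈ J := by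
    constructor
    · intro h; simpa [mul_assoc] using hJ.mconj l h
    · intro h; simpa [mul_assoc] using hJ.mconj' l h
  rw [h1, hJ.neg_add_mem_iff, h2]

lemma IsIdeal.coset_iff (hJ : IsIdeal J) (l x : B) :
    (∃ a ∈ J, x = a + l) ↔ (∃ a ∈ J, x = a * l) := by
  have e1 : (∃ a ∈ J, x = a + l) ↔ x + -l ∈ J := by
    constructor
    · rintro ⟨a, ha, rfl⟩; simpa [add_assoc] using ha
    · intro h; exact ⟨x + -l, h, by simp [add_assoc]⟩
  have e2 : (∃ a ∈ J, x = a * l) ↔ x * l⁻¹ ∈ J := by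
    constructor
    · rintro ⟨a, ha, rfl⟩; simpa [mul_assoc] using ha
    · intro h; exact ⟨x * l⁻¹, h, by simp [mul_assoc]⟩
  rw [e1, e2, hJ.add_neg_mem_iff]

/-! #### Membership in commutator ideals -/

lemma addCommutator_mem_commIdeal {X Y : Set B} {x y : B} (hx : x ∈ X) (hy : y ∈ Y) :
    addCommutator x y ∈ commIdeal X Y := by
  apply subset_idealClosure
  exact Or.inl (Or.inl (AddSubgroup.subset_closure ⟨x, hx, y, hy, rfl⟩))

lemma mulCommutator_mem_commIdeal {X Y : Set B} {x y : B} (hx : x ∈ X) (hy : y ∈ Y) :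
    mulCommutator x y ∈ commIdeal X Y := by
  apply subset_idealClosure
  exact Or.inl (Or.inr (Subgroup.subset_closure ⟨x, hx, y, hy, rfl⟩))

lemma mixed_mem_commIdeal {X Y : Set B} {x y : B} (hx : x ∈ X) (hy : y ∈ Y) :
    x * y + -(x + y) ∈ commIdeal X Y := by
  apply subset_idealClosure
  exact Or.inr ⟨x, hx, y, hy, rfl⟩

lemma star_mem_commIdeal {X Y : Set B} {x y : B} (hx : x ∈ X) (hy : y ∈ Y) :
    sbStar x y ∈ commIdeal X Y := by
  have hJ := isIdeal_idealClosure (commSet X Y)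
  have h := mixed_mem_commIdeal hx hy
  rw [sb_mixed_eq] at h
  have h2 := hJ.conj' x h
  have e : -x + (x + sbStar x y + -x) + x = sbStar x y := by simp [add_assoc]
  rwa [e] at h2

lemma addCommutator_swap_mem_commIdeal {X Y : Set B} {x y : B} (hx : x ∈ X) (hy : y ∈ Y) :
    addCommutator y x ∈ commIdeal X Y := by
  rw [addCommutator_swap]
  exact (isIdeal_idealClosure _).neg (addCommutator_mem_commIdeal hx hy)

lemma mulCommutator_swap_mem_commIdeal {X Y : Set B} {x y : B} (hx : x ∈ X) (hy : y ∈ Y) :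
    mulCommutator y x ∈ commIdeal X Y := by
  rw [mulCommutator_swap]
  exact (isIdeal_idealClosure _).inv (mulCommutator_mem_commIdeal hx hy)

lemma star_swap_mem_commIdeal {X Y : Set B} (hX : IsIdeal X) (hY : IsIdeal Y)
    {x y : B} (hx : x ∈ X) (hy : y ∈ Y) : sbStar y x ∈ commIdeal X Y := by
  set J := commIdeal X Y with hJdef
  have hJ : IsIdeal J := isIdeal_idealClosure _
  have hm : mulCommutator y x ∈ J := mulCommutator_swap_mem_commIdeal hx hy
  have hs : sbStar x y ∈ J := star_mem_commIdeal hx hy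
  have hyx : y * x = x * y + (sbStar (x * y) (mulCommutator y x) + mulCommutator y x) := by
    have : y * x = (x * y) * mulCommutator y x := by simp [mulCommutator, mul_assoc]
    rw [this, sb_mul_eq (x * y) (mulCommutator y x), add_assoc]
  set j1 := sbStar (x * y) (mulCommutator y x) + mulCommutator y x with hj1def
  have hj1 : j1 ∈ J := hJ.add (hJ.starl _ hm) hm
  have e : sbStar y x = (-y + x) + (sbStar x y + ((y + j1 + -y) + (y + -x))) := by
    rw [sbStar, hyx, sb_mul_eq x y]; simp [add_assoc]
  rw [e, hJ.cancel_mid hs, hJ.cancel_mid (hJ.conj y hj1)]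
  have e2 : -y + x + (y + -x) = addCommutator y (-x) := by simp [addCommutator, add_assoc]
  rw [e2, addCommutator_swap]
  exact hJ.neg (addCommutator_mem_commIdeal (hX.neg hx) hy)

lemma commSet_subset_of_ideal {X : Set B} (hX : IsIdeal X) (Y : Set B) : commSet X Y ⊆ X := by
  have h1 : {x : B | ∃ i ∈ X, ∃ j ∈ Y, x = addCommutator i j} ⊆ X := by
    rintro _ ⟨i, hi, j, hj, rfl⟩
    have : addCommutator i j = -i + (-j + i + j) := by simp [addCommutator, add_assoc]
    rw [this]; exact hX.add (hX.neg hi) (hX.conj' j hi)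
  have h2 : {x : B | ∃ i ∈ X, ∃ j ∈ Y, x = mulCommutator i j} ⊆ X := by
    rintro _ ⟨i, hi, j, hj, rfl⟩
    have : mulCommutator i j = i⁻¹ * (j⁻¹ * i * j) := by simp [mulCommutator, mul_assoc]
    rw [this]; exact hX.mul (hX.inv hi) (hX.mconj' j hi)
  rintro x (h | h)
  · rcases h with h | h
    · exact (AddSubgroup.closure_le hX.isSubbrace.addSubgroup).2 h1 h
    · exact (Subgroup.closure_le hX.isSubbrace.subgroup).2 h2 h
  · rcases h with ⟨i, hi, j, hj, rfl⟩
    rw [sb_mixed_eq]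
    exact hX.conj i (hX.starr hi j)

lemma commIdeal_subset_left {X : Set B} (hX : IsIdeal X) (Y : Set B) : commIdeal X Y ⊆ X :=
  idealClosure_le hX (commSet_subset_of_ideal hX Y)

lemma isIdeal_commIdeal (X Y : Set B) : IsIdeal (commIdeal X Y) := isIdeal_idealClosure _

/-! #### Sum of an ideal and a left ideal -/

lemma sum_mem_iff_mul {A L : Set B} (hA : IsIdeal A) (x : B) :
    (∃ a ∈ A, ∃ l ∈ L, x = a + l) ↔ (∃ a ∈ A, ∃ l ∈ L, x = a * l) := by
  constructor
  · rintro ⟨a, ha, l, hl, rfl⟩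
    obtain ⟨a', ha', e⟩ := (hA.coset_iff l (a + l)).1 ⟨a, ha, rfl⟩
    exact ⟨a', ha', l, hl, e⟩
  · rintro ⟨a, ha, l, hl, rfl⟩
    obtain ⟨a', ha', e⟩ := (hA.coset_iff l (a * l)).2 ⟨a, ha, rfl⟩
    exact ⟨a', ha', l, hl, e⟩

lemma sum_isLeftIdeal {A L : Set B} (hA : IsIdeal A) (hL : IsLeftIdeal L) :
    IsLeftIdeal {x : B | ∃ a ∈ A, ∃ l ∈ L, x = a + l} := by
  set M := {x : B | ∃ a ∈ A, ∃ l ∈ L, x = a + l} with hMdef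
  have hmul : ∀ x, x ∈ M ↔ ∃ a ∈ A, ∃ l ∈ L, x = a * l := fun x => sum_mem_iff_mul hA x
  constructor
  · constructor
    · exact ⟨0, hA.zero_mem, 0, hL.isSubbrace.zero_mem, by simp⟩
    · rintro _ _ ⟨a, ha, l, hl, rfl⟩ ⟨a', ha', l', hl', rfl⟩
      refine ⟨a + (l + a' + -l), hA.add ha (hA.conj l ha'), l + l',
        hL.isSubbrace.add_mem hl hl', by simp [add_assoc]⟩
    · rintro _ ⟨a, ha, l, hl, rfl⟩
      exact ⟨-l + -a + l, hA.conj' l (hA.neg ha), -l, hL.isSubbrace.neg_mem hl,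
        by simp [add_assoc, neg_add_rev]⟩
    · intro x y hx hy
      rw [hmul] at hx hy ⊢
      obtain ⟨a, ha, l, hl, rfl⟩ := hx; obtain ⟨a', ha', l', hl', rfl⟩ := hy
      exact ⟨a * (l * a' * l⁻¹), hA.mul ha (hA.mconj l ha'), l * l',
        hL.isSubbrace.mul_mem hl hl', by simp [mul_assoc]⟩
    · intro x hx
      rw [hmul] at hx ⊢
      obtain ⟨a, ha, l, hl, rfl⟩ := hx
      exact ⟨l⁻¹ * a⁻¹ * l, hA.mconj' l (hA.inv ha), l⁻¹, hL.isSubbrace.inv_mem hl,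
        by simp [mul_assoc, mul_inv_rev]⟩
  · rintro b _ ⟨a, ha, l, hl, rfl⟩
    rw [sb_star_add]
    set s1 := sbStar b a with hs1
    set s2 := sbStar b l with hs2
    have hs1A : s1 ∈ A := hA.starl b ha
    have hs2L : s2 ∈ L := hL.star_mem_left b hl
    have hq : a + s2 + -a + -s2 ∈ A := by
      have : a + s2 + -a + -s2 = a + (s2 + -a + -s2) := by simp [add_assoc]
      rw [this]; exact hA.add ha (by simpa [add_assoc] using hA.conj s2 (hA.neg ha))
    have e : s1 + a + s2 + -a = (s1 + (a + s2 + -a + -s2)) + s2 := by simp [add_assoc]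
    rw [e]
    exact ⟨s1 + (a + s2 + -a + -s2), hA.add hs1A hq, s2, hs2L, rfl⟩

lemma maximal_cover {A L : Set B} (hA : IsIdeal A) (hL : IsMaximalLeftIdeal L)
    (hnot : ¬ A ⊆ L) : ∀ b : B, ∃ a ∈ A, ∃ l ∈ L, b = a + l := by
  set M := {x : B | ∃ a ∈ A, ∃ l ∈ L, x = a + l} with hMdef
  have hM : IsLeftIdeal M := sum_isLeftIdeal hA hL.1
  have hLM : L ⊆ M := fun l hl => ⟨0, hA.zero_mem, l, hl, by simp⟩
  obtain ⟨a0, ha0, ha0L⟩ := Set.not_subset.1 hnot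
  have hMneL : M ≠ L := by
    intro h
    exact ha0L (h ▸ ⟨a0, ha0, 0, hL.1.isSubbrace.zero_mem, by simp⟩)
  rcases hL.2.2 M hM hLM with h | h
  · exact absurd h hMneL
  · intro b; have : b ∈ M := h ▸ Set.mem_univ b; exact this

lemma maximal_cover_mul {A L : Set B} (hA : IsIdeal A) (hL : IsMaximalLeftIdeal L)
    (hnot : ¬ A ⊆ L) : ∀ b : B, ∃ a ∈ A, ∃ l ∈ L, b = a * l := fun b =>
  (sum_mem_iff_mul hA b).1 (maximal_cover hA hL hnot b)

/-! #### The key ideal `H + (L ∩ G)` -/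

lemma W_isIdeal {I L G H : Set B} (hI : IsIdeal I) (hL : IsLeftIdeal L)
    (hG : IsIdeal G) (hH : IsIdeal H) (hGI : G ⊆ I) (hHG : H ⊆ G)
    (hac : ∀ g ∈ G, ∀ i ∈ I, addCommutator g i ∈ H)
    (hmc : ∀ g ∈ G, ∀ i ∈ I, mulCommutator g i ∈ H)
    (hsr : ∀ i ∈ I, ∀ g ∈ G, sbStar i g ∈ H)
    (hdec : ∀ b : B, ∃ g ∈ G, ∃ l ∈ L, b = g + l) :
    IsIdeal {x : B | ∃ h ∈ H, ∃ c ∈ L ∩ G, x = h + c} := by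
  set W := {x : B | ∃ h ∈ H, ∃ c ∈ L ∩ G, x = h + c} with hWdef
  have hdecm : ∀ b : B, ∃ g ∈ G, ∃ l ∈ L, b = g * l := fun b =>
    (sum_mem_iff_mul hG b).1 (hdec b)
  have hWmul : ∀ x, x ∈ W ↔ ∃ h ∈ H, ∃ c ∈ L ∩ G, x = h * c := fun x =>
    sum_mem_iff_mul hH x
  -- sandwich commutators
  have hsand : ∀ i ∈ I, ∀ c ∈ G, i + c + -i + -c ∈ H := by
    intro i hi c hc
    have h := hac (-c) (hG.neg hc) (-i) (hI.neg hi)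
    have e : addCommutator (-c) (-i) = -(i + c + -i + -c) := by
      simp [addCommutator, neg_add_rev, add_assoc]
    rw [e] at h
    exact (hH.mem_neg).1 h
  have hCG : ∀ c ∈ L ∩ G, ∀ i ∈ I, ∃ h ∈ H, i + c + -i = h + c := by
    intro c hc i hi
    exact ⟨i + c + -i + -c, hsand i hi c hc.2, by simp [add_assoc]⟩
  -- absorption
  have WmemAdd : ∀ h ∈ H, ∀ c ∈ L ∩ G, h + c ∈ W := fun h hh c hc => ⟨h, hh, c, hc, rfl⟩
  have WabsorbL : ∀ h ∈ H, ∀ w ∈ W, h + w ∈ W := by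
    rintro h hh _ ⟨h', hh', c, hc, rfl⟩
    exact ⟨h + h', hH.add hh hh', c, hc, by simp [add_assoc]⟩
  have WabsorbR : ∀ w ∈ W, ∀ h ∈ H, w + h ∈ W := by
    rintro _ ⟨h', hh', c, hc, rfl⟩ h hh
    exact ⟨h' + (c + h + -c), hH.add hh' (hH.conj c hh), c, hc, by simp [add_assoc]⟩
  constructor
  · exact fun x _ => Set.mem_univ x
  · constructor
    · exact ⟨0, hH.zero_mem, 0, ⟨hL.isSubbrace.zero_mem, hG.zero_mem⟩, by simp⟩
    · rintro _ _ ⟨h, hh, c, hc, rfl⟩ ⟨h', hh', c', hc', rfl⟩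
      refine ⟨h + (c + h' + -c), hH.add hh (hH.conj c hh'), c + c',
        ⟨hL.isSubbrace.add_mem hc.1 hc'.1, hG.add hc.2 hc'.2⟩, by simp [add_assoc]⟩
    · rintro _ ⟨h, hh, c, hc, rfl⟩
      refine ⟨-c + -h + c, hH.conj' c (hH.neg hh), -c,
        ⟨hL.isSubbrace.neg_mem hc.1, hG.neg hc.2⟩, by simp [add_assoc, neg_add_rev]⟩
    · intro x y hx hy
      rw [hWmul] at hx hy
      refine (hWmul _).2 ?_
      obtain ⟨h, hh, c, hc, rfl⟩ := hx; obtain ⟨h', hh', c', hc', rfl⟩ := hy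
      exact ⟨h * (c * h' * c⁻¹), hH.mul hh (hH.mconj c hh'), c * c',
        ⟨hL.isSubbrace.mul_mem hc.1 hc'.1, hG.mul hc.2 hc'.2⟩, by simp [mul_assoc]⟩
    · intro x hx
      rw [hWmul] at hx
      refine (hWmul _).2 ?_
      obtain ⟨h, hh, c, hc, rfl⟩ := hx
      exact ⟨c⁻¹ * h⁻¹ * c, hH.mconj' c (hH.inv hh), c⁻¹,
        ⟨hL.isSubbrace.inv_mem hc.1, hG.inv hc.2⟩, by simp [mul_assoc, mul_inv_rev]⟩
  · rintro b - _ ⟨h, hh, c, hc, rfl⟩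
    obtain ⟨g0, hg0, l0, hl0, hb⟩ := hdec b
    have hc2 : l0 + c + -l0 ∈ L ∩ G :=
      ⟨hL.isSubbrace.add_mem (hL.isSubbrace.add_mem hl0 hc.1) (hL.isSubbrace.neg_mem hl0),
        hG.conj l0 hc.2⟩
    obtain ⟨h2, hh2, e2⟩ := hCG _ hc2 g0 (hGI hg0)
    have key : b + c + -b = h2 + (l0 + c + -l0) := by
      rw [hb]
      calc g0 + l0 + c + -(g0 + l0) = g0 + (l0 + c + -l0) + -g0 := by
            simp [add_assoc, neg_add_rev]
        _ = h2 + (l0 + c + -l0) := e2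
    have e4 : b + (h + c) + -b = (b + h + -b) + (b + c + -b) := by simp [add_assoc]
    show b + (h + c) + -b ∈ W
    rw [e4, key]
    exact ⟨(b + h + -b) + h2, hH.add (hH.conj b hh) hh2, l0 + c + -l0, hc2,
      by simp [add_assoc]⟩
  · rintro b - _ hx
    rw [hWmul] at hx
    obtain ⟨h, hh, c, hc, rfl⟩ := hx
    obtain ⟨g0, hg0, l0, hl0, hb⟩ := hdecm b
    have hc2 : l0 * c * l0⁻¹ ∈ L ∩ G :=
      ⟨hL.isSubbrace.mul_mem (hL.isSubbrace.mul_mem hl0 hc.1) (hL.isSubbrace.inv_mem hl0),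
        hG.mconj l0 hc.2⟩
    have hm0 : mulCommutator g0⁻¹ (l0 * c * l0⁻¹)⁻¹ ∈ H :=
      hmc _ (hG.inv hg0) _ (hI.inv (hGI hc2.2))
    refine (hWmul _).2 ?_
    refine ⟨(b * h * b⁻¹) * mulCommutator g0⁻¹ (l0 * c * l0⁻¹)⁻¹,
      hH.mul (hH.mconj b hh) hm0, l0 * c * l0⁻¹, hc2, ?_⟩
    rw [hb]; simp [mulCommutator, mul_assoc, mul_inv_rev]
  · rintro b - _ ⟨h, hh, c, hc, rfl⟩
    show sbStar b (h + c) ∈ W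
    rw [sb_star_add]
    have hs2 : sbStar b c ∈ L ∩ G := ⟨hL.star_mem_left b hc.1, hG.starl b hc.2⟩
    obtain ⟨h3, hh3, e3⟩ := hCG _ hs2 h (hGI (hHG hh))
    have e : sbStar b h + h + sbStar b c + -h = sbStar b h + (h + sbStar b c + -h) := by
      simp [add_assoc]
    rw [e, e3]
    exact WabsorbL _ (hH.starl b hh) _ (WmemAdd _ hh3 _ hs2)
  · rintro _ hx b -
    rw [hWmul] at hx
    obtain ⟨h, hh, c, hc, rfl⟩ := hx
    rw [sb_star_mul]
    obtain ⟨g0, hg0, l0, hl0, hb⟩ := hdec b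
    have hu2 : sbStar c l0 ∈ L ∩ G := ⟨hL.star_mem_left c hl0, hG.starr hc.2 l0⟩
    obtain ⟨h4, hh4, e4⟩ := hCG _ hu2 g0 (hGI hg0)
    have ht2 : sbStar c b ∈ W := by
      rw [hb, sb_star_add]
      have e : sbStar c g0 + g0 + sbStar c l0 + -g0 = sbStar c g0 + (g0 + sbStar c l0 + -g0) := by
        simp [add_assoc]
      rw [e, e4]
      exact WabsorbL _ (hsr c (hGI hc.2) g0 hg0) _ (WmemAdd _ hh4 _ hu2)
    exact WabsorbR _ (WabsorbL _ (hH.starr hh _) _ ht2) _ (hH.starr hh b)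
lemma IsSubbrace.addCommutator_mem {S : Set B} (hS : IsSubbrace S) {x y : B}
    (hx : x ∈ S) (hy : y ∈ S) : addCommutator x y ∈ S :=
  hS.add_mem (hS.add_mem (hS.add_mem (hS.neg_mem hx) (hS.neg_mem hy)) hx) hy

lemma IsSubbrace.mulCommutator_mem {S : Set B} (hS : IsSubbrace S) {x y : B}
    (hx : x ∈ S) (hy : y ∈ S) : mulCommutator x y ∈ S :=
  hS.mul_mem (hS.mul_mem (hS.mul_mem (hS.inv_mem hx) (hS.inv_mem hy)) hx) hy

lemma commIdeal_subset_W {I L X : Set B} (hI : IsIdeal I) (hL : IsLeftIdeal L)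
    (hX : IsIdeal X) (hXI : X ⊆ I)
    (hdec : ∀ b : B, ∃ g ∈ commIdeal X I, ∃ l ∈ L, b = g + l) :
    commIdeal X I ⊆
      {x : B | ∃ h ∈ commIdeal (commIdeal X I) I, ∃ c ∈ L ∩ commIdeal X I, x = h + c} := by
  set G := commIdeal X I with hGdef
  set H := commIdeal G I with hHdef
  set W := {x : B | ∃ h ∈ H, ∃ c ∈ L ∩ G, x = h + c} with hWdef
  have hG : IsIdeal G := isIdeal_commIdeal _ _
  have hH : IsIdeal H := isIdeal_commIdeal _ _
  have hGX : G ⊆ X := commIdeal_subset_left hX I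
  have hGI : G ⊆ I := hGX.trans hXI
  have hHG : H ⊆ G := commIdeal_subset_left hG I
  have hW : IsIdeal W :=
    W_isIdeal hI hL hG hH hGI hHG
      (fun g hg i hi => addCommutator_mem_commIdeal hg hi)
      (fun g hg i hi => mulCommutator_mem_commIdeal hg hi)
      (fun i hi g hg => star_swap_mem_commIdeal hG hI hg hi) hdec
  have hdecm : ∀ b : B, ∃ g ∈ G, ∃ l ∈ L, b = g * l := fun b =>
    (sum_mem_iff_mul hG b).1 (hdec b)
  have HsubW : H ⊆ W := fun h hh =>
    ⟨h, hh, 0, ⟨hL.isSubbrace.zero_mem, hG.zero_mem⟩, by simp⟩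
  have CGsubW : L ∩ G ⊆ W := fun c hc => ⟨0, hH.zero_mem, c, hc, by simp⟩
  -- decompositions
  have decompX : ∀ x ∈ X, ∃ g ∈ G, ∃ c ∈ L ∩ X, x = g + c := by
    intro x hx
    obtain ⟨g, hg, l, hl, e⟩ := hdec x
    have hlX : l ∈ X := by
      have : l = -g + x := by rw [e]; simp [add_assoc]
      rw [this]; exact hX.add (hX.neg (hGX hg)) hx
    exact ⟨g, hg, l, ⟨hl, hlX⟩, e⟩
  have decompXm : ∀ x ∈ X, ∃ g ∈ G, ∃ c ∈ L ∩ X, x = g * c := by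
    intro x hx
    obtain ⟨g, hg, l, hl, e⟩ := hdecm x
    have hlX : l ∈ X := by
      have : l = g⁻¹ * x := by rw [e]; simp [mul_assoc]
      rw [this]; exact hX.mul (hX.inv (hGX hg)) hx
    exact ⟨g, hg, l, ⟨hl, hlX⟩, e⟩
  have decompI : ∀ i ∈ I, ∃ g ∈ G, ∃ c ∈ L ∩ I, i = g + c := by
    intro i hi
    obtain ⟨g, hg, l, hl, e⟩ := hdec i
    have hlI : l ∈ I := by
      have : l = -g + i := by rw [e]; simp [add_assoc]
      rw [this]; exact hI.add (hI.neg (hGI hg)) hi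
    exact ⟨g, hg, l, ⟨hl, hlI⟩, e⟩
  have decompIm : ∀ i ∈ I, ∃ g ∈ G, ∃ c ∈ L ∩ I, i = g * c := by
    intro i hi
    obtain ⟨g, hg, l, hl, e⟩ := hdecm i
    have hlI : l ∈ I := by
      have : l = g⁻¹ * i := by rw [e]; simp [mul_assoc]
      rw [this]; exact hI.mul (hI.inv (hGI hg)) hi
    exact ⟨g, hg, l, ⟨hl, hlI⟩, e⟩
  -- additive commutator generators
  have haddgen : ∀ x ∈ X, ∀ i ∈ I, addCommutator x i ∈ W := by
    intro x hx i hi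
    obtain ⟨gx, hgx, cx, hcx, rfl⟩ := decompX x hx
    obtain ⟨gi, hgi, ci, hci, rfl⟩ := decompI i hi
    rw [addCommutator_add_left]
    nth_rewrite 2 [addCommutator_add_right]
    have hiI : gi + ci ∈ I := hI.add (hGI hgi) hci.2
    refine hW.add (HsubW (hH.conj' cx (addCommutator_mem_commIdeal hgx hiI)))
      (hW.add (CGsubW ⟨hL.isSubbrace.addCommutator_mem hcx.1 hci.1,
        addCommutator_mem_commIdeal hcx.2 hci.2⟩)
        (HsubW (hH.conj' ci (addCommutator_swap_mem_commIdeal hgi (hXI hcx.2)))))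
  -- multiplicative commutator generators
  have hmulgen : ∀ x ∈ X, ∀ i ∈ I, mulCommutator x i ∈ W := by
    intro x hx i hi
    obtain ⟨gx, hgx, cx, hcx, rfl⟩ := decompXm x hx
    obtain ⟨gi, hgi, ci, hci, rfl⟩ := decompIm i hi
    rw [mulCommutator_mul_left]
    nth_rewrite 2 [mulCommutator_mul_right]
    have hiI : gi * ci ∈ I := hI.mul (hGI hgi) hci.2
    refine hW.mul (HsubW (hH.mconj' cx (mulCommutator_mem_commIdeal hgx hiI)))
      (hW.mul (CGsubW ⟨hL.isSubbrace.mulCommutator_mem hcx.1 hci.1,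
        mulCommutator_mem_commIdeal hcx.2 hci.2⟩)
        (HsubW (hH.mconj' ci (mulCommutator_swap_mem_commIdeal hgi (hXI hcx.2)))))
  -- mixed generators
  have hstargen : ∀ x ∈ X, ∀ i ∈ I, x * i + -(x + i) ∈ W := by
    intro x hx i hi
    have hstar : sbStar x i ∈ W := by
      obtain ⟨gx, hgx, cx, hcx, rfl⟩ := decompXm x hx
      obtain ⟨gi, hgi, ci, hci, hieq⟩ := decompI i hi
      rw [sb_star_mul]
      have h2 : sbStar cx i ∈ W := by
        rw [hieq, sb_star_add]
        have hu2 : sbStar cx ci ∈ L ∩ G :=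
          ⟨hL.star_mem_left cx hci.1, star_mem_commIdeal hcx.2 hci.2⟩
        have hsand : gi + sbStar cx ci + -gi + -(sbStar cx ci) ∈ H := by
          have h := addCommutator_mem_commIdeal (X := G) (Y := I)
            (hG.neg hu2.2) (hI.neg (hGI hgi))
          have e : addCommutator (-(sbStar cx ci)) (-gi) =
              -(gi + sbStar cx ci + -gi + -(sbStar cx ci)) := by
            simp [addCommutator, neg_add_rev, add_assoc]
          rw [e] at h
          exact hH.mem_neg.1 h
        have e2 : sbStar cx gi + gi + sbStar cx ci + -gi
            = sbStar cx gi + ((gi + sbStar cx ci + -gi + -(sbStar cx ci)) + sbStar cx ci) := by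
          simp [add_assoc]
        rw [e2]
        exact hW.add (HsubW (star_swap_mem_commIdeal hG hI hgi (hXI hcx.2)))
          (hW.add (HsubW hsand) (CGsubW hu2))
      have h1 : sbStar gx (sbStar cx i) ∈ H :=
        star_mem_commIdeal hgx (hI.starr (hXI hcx.2) i)
      have h3 : sbStar gx i ∈ H := star_mem_commIdeal hgx hi
      exact hW.add (hW.add (HsubW h1) h2) (HsubW h3)
    rw [sb_mixed_eq]
    exact hW.conj x hstar
  -- conclude
  refine idealClosure_le hW ?_
  rintro z (h | h)
  · rcases h with h | h
    · refine (AddSubgroup.closure_le hW.isSubbrace.addSubgroup).2 ?_ h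
      rintro _ ⟨a, ha, b, hb, rfl⟩; exact haddgen a ha b hb
    · refine (Subgroup.closure_le hW.isSubbrace.subgroup).2 ?_ h
      rintro _ ⟨a, ha, b, hb, rfl⟩; exact hmulgen a ha b hb
  · rcases h with ⟨a, ha, b, hb, rfl⟩; exact hstargen a ha b hb

/-! #### Lower central series facts and abelianness of BCN ideals -/

lemma lowerCentralB_isIdeal {I : Set B} (hI : IsIdeal I) : ∀ k, IsIdeal (lowerCentralB I k)
  | 0 => hI
  | (_ + 1) => isIdeal_commIdeal _ _

lemma lowerCentralB_subset {I : Set B} (hI : IsIdeal I) : ∀ k, lowerCentralB I k ⊆ I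
  | 0 => subset_rfl
  | (k + 1) => (commIdeal_subset_left (lowerCentralB_isIdeal hI k) I).trans
      (lowerCentralB_subset hI k)

lemma bcn_commIdeal_subset_maxLeft {I L : Set B} (hI : IsIdeal I)
    (hbcn : BCentrallyNilpotent I) (hL : IsMaximalLeftIdeal L) : commIdeal I I ⊆ L := by
  by_contra hnot
  have h0L : ({0} : Set B) ⊆ L := by
    intro x hx; rw [Set.mem_singleton_iff] at hx; rw [hx]
    exact hL.1.isSubbrace.zero_mem
  have claim : ∀ k, ¬ lowerCentralB I (k + 1) ⊆ L := by
    intro k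
    induction k with
    | zero => exact hnot
    | succ k ih =>
      intro hsub
      apply ih
      have hX : IsIdeal (lowerCentralB I k) := lowerCentralB_isIdeal hI k
      have hXI : lowerCentralB I k ⊆ I := lowerCentralB_subset hI k
      have hG : IsIdeal (commIdeal (lowerCentralB I k) I) := isIdeal_commIdeal _ _
      have hdec : ∀ b : B, ∃ g ∈ commIdeal (lowerCentralB I k) I, ∃ l ∈ L, b = g + l :=
        maximal_cover hG hL ih
      have hsubW := commIdeal_subset_W hI hL.1 hX hXI hdec
      intro g hg
      obtain ⟨h, hh, c, hc, rfl⟩ := hsubW hg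
      exact hL.1.isSubbrace.add_mem (hsub hh) hc.1
  obtain ⟨n, hn⟩ := hbcn
  cases n with
  | zero =>
    apply hnot
    have hI0 : I = ({0} : Set B) := hn
    exact (commIdeal_subset_left hI I).trans (hI0 ▸ (hI0 ▸ h0L))
  | succ n =>
    exact claim n (by rw [show lowerCentralB I (n + 1) = ({0} : Set B) from hn]; exact h0L)

lemma bcn_subset_fit {I : Set B} (hI : IsIdeal I) (hbcn : BCentrallyNilpotent I) :
    I ⊆ FitIdeal B := fun x hx => subset_idealClosure _ ⟨I, ⟨hI, hbcn⟩, hx⟩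

lemma bcn_abelian (hFrat : FratIdeal B = ({0} : Set B)) {I : Set B} (hI : IsIdeal I)
    (hbcn : BCentrallyNilpotent I) : ∀ a ∈ I, ∀ b ∈ I, a + b = b + a ∧ a * b = a + b := by
  have hsub : commIdeal I I ⊆ ({0} : Set B) := by
    rw [← hFrat]
    intro x hx
    refine ⟨Set.mem_sInter.2 fun L hL => bcn_commIdeal_subset_maxLeft hI hbcn hL hx, ?_⟩
    exact bcn_subset_fit hI hbcn (commIdeal_subset_left hI I hx)
  intro a ha b hb
  have h1 : addCommutator a b = 0 :=
    Set.mem_singleton_iff.1 (hsub (addCommutator_mem_commIdeal ha hb))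
  have h2 : a * b + -(a + b) = 0 :=
    Set.mem_singleton_iff.1 (hsub (mixed_mem_commIdeal ha hb))
  constructor
  · have h3 := congrArg (fun t => b + a + t) h1
    simpa [addCommutator, add_assoc] using h3
  · have h3 := congrArg (fun t => t + (a + b)) h2
    simpa [add_assoc] using h3

lemma exists_maxLeft_not_subset (hFrat : FratIdeal B = ({0} : Set B)) {K : Set B}
    (hK : IsIdeal K) (hfit : K ⊆ FitIdeal B) (hne : K ≠ ({0} : Set B)) :
    ∃ L, IsMaximalLeftIdeal L ∧ ¬ K ⊆ L := by
  by_contra hcon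
  push_neg at hcon
  have hsub : K ⊆ FratIdeal B := fun x hx =>
    ⟨Set.mem_sInter.2 fun L hL => hcon L hL hx, hfit hx⟩
  rw [hFrat] at hsub
  refine hne (Set.Subset.antisymm hsub ?_)
  intro x hx; rw [Set.mem_singleton_iff] at hx; rw [hx]; exact hK.zero_mem

/-! #### Abelian ideals -/

lemma abelian_inv {I : Set B} (hI : IsIdeal I)
    (hab : ∀ a ∈ I, ∀ b ∈ I, a + b = b + a ∧ a * b = a + b) {a : B} (ha : a ∈ I) :
    a⁻¹ = -a := by
  have h := (hab a ha (-a) (hI.neg ha)).2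
  rw [add_neg_cancel, zero_eq_one] at h
  exact inv_eq_of_mul_eq_one_right h

lemma abelian_commIdeal_eq_zero {I : Set B} (hI : IsIdeal I)
    (hab : ∀ a ∈ I, ∀ b ∈ I, a + b = b + a ∧ a * b = a + b) :
    commIdeal I I = ({0} : Set B) := by
  apply Set.Subset.antisymm
  · apply idealClosure_le isIdeal_zero
    rintro z (h | h)
    · rcases h with h | h
      · have hgen : {x : B | ∃ i ∈ I, ∃ j ∈ I, x = addCommutator i j} ⊆
            (⊥ : AddSubgroup B) := by
          rintro _ ⟨a, ha, b, hb, rfl⟩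
          have hcomm := (hab a ha b hb).1
          simp [AddSubgroup.mem_bot, addCommutator, add_assoc, hcomm]
        have := (AddSubgroup.closure_le (⊥ : AddSubgroup B)).2 hgen h
        rw [AddSubgroup.mem_bot] at this
        exact this
      · have hgen : {x : B | ∃ i ∈ I, ∃ j ∈ I, x = mulCommutator i j} ⊆
            (⊥ : Subgroup B) := by
          rintro _ ⟨a, ha, b, hb, rfl⟩
          have e1 : (-a : B) * -b = -a + -b := (hab _ (hI.neg ha) _ (hI.neg hb)).2
          have e3 : -a + -b + a = -b := by
            rw [add_assoc, (hab _ (hI.neg hb) a ha).1]; simp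
          have e2 : (-a + -b : B) * a = -a + -b + a :=
            (hab _ (hI.add (hI.neg ha) (hI.neg hb)) a ha).2
          have e4 : (-b : B) * b = -b + b := (hab _ (hI.neg hb) b hb).2
          show mulCommutator a b ∈ (⊥ : Subgroup B)
          rw [Subgroup.mem_bot, mulCommutator, abelian_inv hI hab ha,
            abelian_inv hI hab hb, e1, e2, e3, e4]
          rw [neg_add_cancel, zero_eq_one]
        have := (Subgroup.closure_le (⊥ : Subgroup B)).2 hgen h
        rw [Subgroup.mem_bot] at this
        rw [this, ← zero_eq_one]
        exact rfl
    · rcases h with ⟨a, ha, b, hb, rfl⟩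
      rw [(hab a ha b hb).2]
      simp [add_assoc]
  · intro x hx; rw [Set.mem_singleton_iff] at hx; rw [hx]
    exact (isIdeal_commIdeal I I).zero_mem

lemma abelian_bcn {I : Set B} (hI : IsIdeal I)
    (hab : ∀ a ∈ I, ∀ b ∈ I, a + b = b + a ∧ a * b = a + b) : BCentrallyNilpotent I :=
  ⟨1, abelian_commIdeal_eq_zero hI hab⟩

lemma abelian_inter_isIdeal {I L : Set B} (hI : IsIdeal I) (hL : IsLeftIdeal L)
    (hab : ∀ a ∈ I, ∀ b ∈ I, a + b = b + a ∧ a * b = a + b)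
    (hdec : ∀ b : B, ∃ i ∈ I, ∃ l ∈ L, b = i + l) : IsIdeal (I ∩ L) := by
  have hdecm : ∀ b : B, ∃ i ∈ I, ∃ l ∈ L, b = i * l := fun b =>
    (sum_mem_iff_mul hI b).1 (hdec b)
  have hcomm : ∀ i ∈ I, ∀ c ∈ I, i + c + -i = c := by
    intro i hi c hc; rw [(hab i hi c hc).1]; simp [add_assoc]
  constructor
  · exact fun x _ => Set.mem_univ x
  · exact ⟨⟨hI.zero_mem, hL.isSubbrace.zero_mem⟩,
      fun a b ha hb => ⟨hI.add ha.1 hb.1, hL.isSubbrace.add_mem ha.2 hb.2⟩,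
      fun a ha => ⟨hI.neg ha.1, hL.isSubbrace.neg_mem ha.2⟩,
      fun a b ha hb => ⟨hI.mul ha.1 hb.1, hL.isSubbrace.mul_mem ha.2 hb.2⟩,
      fun a ha => ⟨hI.inv ha.1, hL.isSubbrace.inv_mem ha.2⟩⟩
  · rintro b - a ha
    obtain ⟨i, hi, l, hl, rfl⟩ := hdec b
    have hc2 : l + a + -l ∈ I ∩ L := ⟨hI.conj l ha.1,
      hL.isSubbrace.add_mem (hL.isSubbrace.add_mem hl ha.2) (hL.isSubbrace.neg_mem hl)⟩
    have e : (i + l) + a + -(i + l) = i + (l + a + -l) + -i := by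
      simp [add_assoc, neg_add_rev]
    rw [e, hcomm i hi _ hc2.1]
    exact hc2
  · rintro b - a ha
    obtain ⟨i, hi, l, hl, rfl⟩ := hdecm b
    have hc2 : l * a * l⁻¹ ∈ I ∩ L := ⟨hI.mconj l ha.1,
      hL.isSubbrace.mul_mem (hL.isSubbrace.mul_mem hl ha.2) (hL.isSubbrace.inv_mem hl)⟩
    have hmcomm : i * (l * a * l⁻¹) * i⁻¹ = l * a * l⁻¹ := by
      have e1 : i * (l * a * l⁻¹) = (l * a * l⁻¹) * i := by
        rw [(hab i hi _ hc2.1).2, (hab _ hc2.1 i hi).2, (hab i hi _ hc2.1).1]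
      rw [e1, mul_inv_cancel_right]
    have e : (i * l) * a * (i * l)⁻¹ = i * (l * a * l⁻¹) * i⁻¹ := by
      simp [mul_assoc, mul_inv_rev]
    rw [e, hmcomm]
    exact hc2
  · rintro b - a ha
    exact ⟨hI.starl b ha.1, hL.star_mem_left b ha.2⟩
  · rintro a ha b -
    obtain ⟨i, hi, l, hl, rfl⟩ := hdec b
    rw [sb_star_add]
    have h0 : sbStar a i = 0 := by
      rw [sbStar, (hab a ha.1 i hi).2]; simp [add_assoc]
    have hc3 : sbStar a l ∈ I ∩ L := ⟨hI.starr ha.1 l, hL.star_mem_left a hl⟩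
    have e : sbStar a i + i + sbStar a l + -i = i + sbStar a l + -i := by
      rw [h0]; simp
    rw [e, hcomm i hi _ hc3.1]
    exact hc3

/-! #### Minimal ideals -/

lemma exists_minimal_ideal [Finite B] :
    ∀ n (I : Set B), I.ncard ≤ n → IsIdeal I → I ≠ ({0} : Set B) →
      ∃ A : Set B, IsIdeal A ∧ A ⊆ I ∧ A ≠ ({0} : Set B) ∧
        ∀ K : Set B, IsIdeal K → K ⊆ A → K = ({0} : Set B) ∨ K = A := by
  intro n
  induction n with
  | zero =>
    intro I hcard hI _
    exfalso
    have h0 : I.ncard = 0 := Nat.le_zero.1 hcard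
    rw [Set.ncard_eq_zero (Set.toFinite I)] at h0
    exact (h0 ▸ hI.zero_mem : (0 : B) ∈ (∅ : Set B))
  | succ n ih =>
    intro I hcard hI hne
    by_cases hmin : ∀ K : Set B, IsIdeal K → K ⊆ I → K = ({0} : Set B) ∨ K = I
    · exact ⟨I, hI, subset_rfl, hne, hmin⟩
    · push_neg at hmin
      obtain ⟨K, hK, hKI, hK0, hKne⟩ := hmin
      have hss : K ⊂ I := ssubset_of_subset_of_ne hKI hKne
      have hlt : K.ncard < I.ncard := Set.ncard_lt_ncard hss (Set.toFinite I)
      obtain ⟨A, h1, h2, h3, h4⟩ := ih K (by omega) hK hK0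
      exact ⟨A, h1, h2.trans hKI, h3, h4⟩

/-! #### Abelian ideals lie in the abelian socle -/

lemma abelian_subset_soc [Finite B] (hFrat : FratIdeal B = ({0} : Set B)) :
    ∀ n (I : Set B), I.ncard ≤ n → IsIdeal I →
      (∀ a ∈ I, ∀ b ∈ I, a + b = b + a ∧ a * b = a + b) →
      I ⊆ idealClosure (⋃₀ {J : Set B | IsIdeal J ∧ J ≠ ({0} : Set B) ∧
        (∀ K : Set B, IsIdeal K → K ⊆ J → K = ({0} : Set B) ∨ K = J) ∧
        ∀ a ∈ J, ∀ b ∈ J, a + b = b + a ∧ a * b = a + b}) := by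
  set S := idealClosure (⋃₀ {J : Set B | IsIdeal J ∧ J ≠ ({0} : Set B) ∧
    (∀ K : Set B, IsIdeal K → K ⊆ J → K = ({0} : Set B) ∨ K = J) ∧
    ∀ a ∈ J, ∀ b ∈ J, a + b = b + a ∧ a * b = a + b}) with hSdef
  have hS : IsIdeal S := isIdeal_idealClosure _
  intro n
  induction n with
  | zero =>
    intro I hcard hI _
    exfalso
    have h0 : I.ncard = 0 := Nat.le_zero.1 hcard
    rw [Set.ncard_eq_zero (Set.toFinite I)] at h0
    exact (h0 ▸ hI.zero_mem : (0 : B) ∈ (∅ : Set B))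
  | succ n ih =>
    intro I hcard hI hab
    by_cases h0 : I = ({0} : Set B)
    · rw [h0]
      intro x hx
      rw [Set.mem_singleton_iff] at hx
      rw [hx]
      exact hS.zero_mem
    · obtain ⟨A, hA, hAI, hA0, hAmin⟩ := exists_minimal_ideal I.ncard I le_rfl hI h0
      have habA : ∀ a ∈ A, ∀ b ∈ A, a + b = b + a ∧ a * b = a + b :=
        fun a ha b hb => hab a (hAI ha) b (hAI hb)
      have hAS : A ⊆ S := fun x hx =>
        subset_idealClosure _ ⟨A, ⟨hA, hA0, hAmin, habA⟩, hx⟩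
      have hAfit : A ⊆ FitIdeal B := bcn_subset_fit hA (abelian_bcn hA habA)
      obtain ⟨L, hL, hnsub⟩ := exists_maxLeft_not_subset hFrat hA hAfit hA0
      have hcover : ∀ b : B, ∃ a ∈ A, ∃ l ∈ L, b = a + l := maximal_cover hA hL hnsub
      have hcoverI : ∀ b : B, ∃ i ∈ I, ∃ l ∈ L, b = i + l := by
        intro b
        obtain ⟨a, ha, l, hl, e⟩ := hcover b
        exact ⟨a, hAI ha, l, hl, e⟩
      have hC : IsIdeal (I ∩ L) := abelian_inter_isIdeal hI hL.1 hab hcoverI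
      have hCne : I ∩ L ≠ I := by
        intro heq
        refine hnsub fun x hx => ?_
        have hxI : x ∈ I := hAI hx
        have : x ∈ I ∩ L := heq.symm ▸ hxI
        exact this.2
      have hssub : I ∩ L ⊂ I := ssubset_of_subset_of_ne Set.inter_subset_left hCne
      have hcard' : (I ∩ L).ncard ≤ n := by
        have := Set.ncard_lt_ncard hssub (Set.toFinite I)
        omega
      have hCS : I ∩ L ⊆ S :=
        ih (I ∩ L) hcard' hC (fun a ha b hb => hab a ha.1 b hb.1)
      intro x hx
      obtain ⟨a, ha, l, hl, e⟩ := hcover x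
      have hlI : l ∈ I := by
        have h' : l = -a + x := by rw [e]; simp [add_assoc]
        rw [h']
        exact hI.add (hI.neg (hAI ha)) hx
      rw [e]
      exact hS.add (hAS ha) (hCS ⟨hlI, hl⟩)

end Aux
end SkewBrace

open SkewBrace

/-- For a finite brace with trivial Frattini ideal, the Fitting ideal is
the sum of all abelian minimal ideals. -/
theorem gaschuetz_fitting {B : Type u} [SkewBrace B] [Finite B]
    (h : FratIdeal B = ({0} : Set B)) :
    FitIdeal B = idealClosure (⋃₀ {I : Set B | IsIdeal I ∧ I ≠ ({0} : Set B) ∧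
      (∀ K : Set B, IsIdeal K → K ⊆ I → K = ({0} : Set B) ∨ K = I) ∧
      ∀ a ∈ I, ∀ b ∈ I, a + b = b + a ∧ a * b = a + b}) := by
  apply Set.Subset.antisymm
  · apply idealClosure_le (isIdeal_idealClosure _)
    rintro x ⟨I, ⟨hI, hbcn⟩, hx⟩
    exact abelian_subset_soc h I.ncard I le_rfl hI (bcn_abelian h hI hbcn) hx
  · apply idealClosure_le (isIdeal_idealClosure _)
    rintro x ⟨I, ⟨hI, _, _, hab⟩, hx⟩
    exact bcn_subset_fit hI (abelian_bcn hI hab) hx
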